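/- (Archimedes, On Conoids and Spheroids 13.) The section of a hyperboloid of revolution by a plane meeting all the generators of the asymptotic cone and not perpendicular to the axis is an ellipse whose major axis lies in the plane through the axis at right angles to the cutting plane: let a, b > 0, m ≠ 0 with m²·b² < a², and c ∈ ℝ. Set λ = 1/b² − m²/a² (so λ > 0), x₀ = m·c/(a²·λ), and ρ = c²/a² − 1 + m²·c²/(a⁴·λ), and assume ρ > 0. Set P₀ = (x₀, 0, m·x₀ + c), u = (1/√(1+m²), 0, m/√(1+m²)), v = (0, 1, 0), A = √(ρ·(1+m²)/λ), B = b·√ρ. Then the intersection of S = {(x, y, z) ∈ ℝ³ : z²/a² − (x² + y²)/b² = 1} with the plane {z = m·x + c} equals {P₀ + (A cos θ) • u + (B sin θ) • v : θ ∈ ℝ}, an ellipse with orthonormal in-plane axes u, v and semi-axes A and B satisfying A > B, the major axis lying in the plane {y = 0}. -/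

import Mathlib

lemma exists_cos_sin_of_sq_add_sq (x y : ℝ) (h : x ^ 2 + y ^ 2 = 1) :
    ∃ θ : ℝ, Real.cos θ = x ∧ Real.sin θ = y := by
  have hx1 : -1 ≤ x := by nlinarith
  have hx2 : x ≤ 1 := by nlinarith
  have hc : Real.cos (Real.arccos x) = x := Real.cos_arccos hx1 hx2
  have hs : Real.sin (Real.arccos x) = Real.sqrt (1 - x ^ 2) := Real.sin_arccos x
  have h1 : (1 - x ^ 2) = y ^ 2 := by linarith
  rcases le_or_gt 0 y with hy | hy
  · exact ⟨Real.arccos x, hc, by rw [hs, h1, Real.sqrt_sq hy]⟩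
  · refine ⟨-Real.arccos x, by rw [Real.cos_neg, hc], ?_⟩
    rw [Real.sin_neg, hs, h1, Real.sqrt_sq_eq_abs, abs_of_neg hy, neg_neg]

set_option maxHeartbeats 1000000 in
theorem hyperboloid_oblique_section_is_ellipse (a b m c lam x₀ ρ A B : ℝ)
    (ha : 0 < a) (hb : 0 < b) (hm : m ≠ 0) (hmb : m ^ 2 * b ^ 2 < a ^ 2)
    (hlam : lam = 1 / b ^ 2 - m ^ 2 / a ^ 2)
    (hx₀ : x₀ = m * c / (a ^ 2 * lam))
    (hρ : ρ = c ^ 2 / a ^ 2 - 1 + m ^ 2 * c ^ 2 / (a ^ 4 * lam))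
    (hρpos : 0 < ρ)
    (hA : A = Real.sqrt (ρ * (1 + m ^ 2) / lam))
    (hB : B = b * Real.sqrt ρ) :
    0 < lam ∧
    ({p : ℝ × ℝ × ℝ | p.2.2 ^ 2 / a ^ 2 - (p.1 ^ 2 + p.2.1 ^ 2) / b ^ 2 = 1} ∩
        {p : ℝ × ℝ × ℝ | p.2.2 = m * p.1 + c} =
      {q : ℝ × ℝ × ℝ | ∃ θ : ℝ,
        q = ((x₀, 0, m * x₀ + c) : ℝ × ℝ × ℝ) +
            (A * Real.cos θ) •
              ((1 / Real.sqrt (1 + m ^ 2), 0, m / Real.sqrt (1 + m ^ 2)) : ℝ × ℝ × ℝ) +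
            (B * Real.sin θ) • (((0 : ℝ), (1 : ℝ), (0 : ℝ)) : ℝ × ℝ × ℝ)}) ∧
    A > B := by
  have ha' : a ≠ 0 := ha.ne'
  have hb' : b ≠ 0 := hb.ne'
  have hlam' : 0 < lam := by
    have : lam = (a ^ 2 - m ^ 2 * b ^ 2) / (a ^ 2 * b ^ 2) := by
      rw [hlam]; field_simp
    rw [this]
    apply div_pos (by linarith) (by positivity)
  have hlamne : lam ≠ 0 := hlam'.ne'
  set s := Real.sqrt (1 + m ^ 2) with hsdef
  have hspos : 0 < s := Real.sqrt_pos.mpr (by positivity)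
  have hs2 : s ^ 2 = 1 + m ^ 2 := Real.sq_sqrt (by positivity)
  have hApos : 0 < A := by
    rw [hA]; exact Real.sqrt_pos.mpr (by positivity)
  have hBpos : 0 < B := by
    rw [hB]; positivity
  have hA2 : lam * A ^ 2 = ρ * (1 + m ^ 2) := by
    rw [hA, Real.sq_sqrt (by positivity)]; field_simp
  have hB2 : B ^ 2 = b ^ 2 * ρ := by
    rw [hB, mul_pow, Real.sq_sqrt hρpos.le]
  -- key identity
  have hid : ∀ x y : ℝ,
      (m * x + c) ^ 2 / a ^ 2 - (x ^ 2 + y ^ 2) / b ^ 2 - 1 =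
        -(lam * (x - x₀) ^ 2 + y ^ 2 / b ^ 2 - ρ) := by
    intro x y
    have hd1 : a ^ 2 - m ^ 2 * b ^ 2 ≠ 0 := by nlinarith
    have hlamv : lam = (a ^ 2 - m ^ 2 * b ^ 2) / (a ^ 2 * b ^ 2) := by
      rw [hlam]; field_simp
    have hx₀v : x₀ = m * c * b ^ 2 / (a ^ 2 - m ^ 2 * b ^ 2) := by
      rw [hx₀, hlamv]; field_simp
    have hρv : ρ = c ^ 2 / a ^ 2 - 1 + m ^ 2 * c ^ 2 * b ^ 2 / (a ^ 2 * (a ^ 2 - m ^ 2 * b ^ 2)) := by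
      rw [hρ, hlamv]; field_simp
    rw [hρv, hx₀v, hlamv]
    field_simp
    ring
  refine ⟨hlam', ?_, ?_⟩
  · ext ⟨x, y, z⟩
    simp only [Set.mem_inter_iff, Set.mem_setOf_eq, Prod.smul_mk, Prod.mk_add_mk,
      Prod.mk.injEq, smul_eq_mul]
    constructor
    · rintro ⟨h1, h2⟩
      have hkey : lam * (x - x₀) ^ 2 + y ^ 2 / b ^ 2 = ρ := by
        have := hid x y
        rw [← h2] at this
        linarith
      have hcirc : (s * (x - x₀) / A) ^ 2 + (y / B) ^ 2 = 1 := by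
        have hkey' : lam * (x - x₀) ^ 2 * b ^ 2 + y ^ 2 = ρ * b ^ 2 := by
          field_simp at hkey; linarith
        have h1 : (s * (x - x₀)) ^ 2 * (lam * B ^ 2) + y ^ 2 * (lam * A ^ 2)
            = (lam * A ^ 2) * B ^ 2 := by
          rw [hA2, hB2]
          linear_combination (ρ * (1 + m ^ 2)) * hkey' + (x - x₀) ^ 2 * b ^ 2 * ρ * lam * hs2
        field_simp
        nlinarith [h1]
      obtain ⟨θ, hcos, hsin⟩ := exists_cos_sin_of_sq_add_sq _ _ hcirc
      refine ⟨θ, ?_⟩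
      rw [hcos, hsin]
      have e1 : x₀ + A * (s * (x - x₀) / A) * (1 / s) + B * (y / B) * 0 = x := by
        field_simp
        ring
      have e2 : (0 : ℝ) + A * (s * (x - x₀) / A) * 0 + B * (y / B) * 1 = y := by
        field_simp
        ring
      have e3 : m * x₀ + c + A * (s * (x - x₀) / A) * (m / s) + B * (y / B) * 0 = z := by
        rw [h2]; field_simp; ring
      exact ⟨e1.symm, e2.symm, e3.symm⟩
    · rintro ⟨θ, hq⟩
      obtain ⟨hx, hy, hz⟩ := hq
      have hzx : z = m * x + c := by
        rw [hx, hz]; ring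
      have hkey : lam * (x - x₀) ^ 2 + y ^ 2 / b ^ 2 = ρ := by
        rw [hx, hy]
        have : x₀ + A * Real.cos θ * (1 / s) + B * Real.sin θ * 0 - x₀
            = A * Real.cos θ / s := by ring
        rw [this]
        have hps : Real.sin θ ^ 2 + Real.cos θ ^ 2 = 1 := Real.sin_sq_add_cos_sq θ
        field_simp
        linear_combination (Real.cos θ) ^ 2 * b ^ 2 * hA2 + (Real.sin θ) ^ 2 * s ^ 2 * hB2 - ρ * b ^ 2 * (Real.cos θ) ^ 2 * hs2 + ρ * b ^ 2 * s ^ 2 * hps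
      constructor
      · have := hid x y
        rw [← hzx] at this
        linarith
      · exact hzx
  · have hm2 : 0 < m ^ 2 := by positivity
    have hsq : B ^ 2 < A ^ 2 := by
      have h1 : lam * B ^ 2 < lam * A ^ 2 := by
        rw [hA2, hB2]
        have hbl : b ^ 2 * lam = 1 - m ^ 2 * b ^ 2 / a ^ 2 := by
          rw [hlam]; field_simp
        have : 0 ≤ m ^ 2 * b ^ 2 / a ^ 2 := by positivity
        nlinarith
      exact lt_of_mul_lt_mul_left h1 hlam'.le
    nlinarith [hApos, hBpos]
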